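/- Let F ∈ K = ℚ(x,y). If F is fixed by the swap automorphism σ (i.e. F(x,y) = F(y,x)) and by the inversion automorphism τ (i.e. F(x,y) = F(x⁻¹,y⁻¹)), then F belongs to the subfield of K generated over ℚ by the two elements t_• = x/(1+2x+2y+x·y) and t_∘ = y/(1+2x+2y+x·y). (This is the key implication of the rationality criterion, Lemma 4.2 of the paper.) -/

import Mathlib

noncomputable section

/-- The field `ℚ(x,y)` of rational functions in two variables. -/
abbrev RatFuncTwo : Type := FractionRing (MvPolynomial (Fin 2) ℚ)

/-- The element `x` of `ℚ(x,y)`. -/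
def xK : RatFuncTwo := algebraMap (MvPolynomial (Fin 2) ℚ) RatFuncTwo (MvPolynomial.X 0)

/-- The element `y` of `ℚ(x,y)`. -/
def yK : RatFuncTwo := algebraMap (MvPolynomial (Fin 2) ℚ) RatFuncTwo (MvPolynomial.X 1)

/-- `t_• = x/(1+2x+2y+xy)`. -/
def tBul : RatFuncTwo := xK / (1 + 2 * xK + 2 * yK + xK * yK)

/-- `t_∘ = y/(1+2x+2y+xy)`. -/
def tCir : RatFuncTwo := yK / (1 + 2 * xK + 2 * yK + xK * yK)

/-! ### Auxiliary definitions -/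

/-- The common denominator `D = 1 + 2x + 2y + xy`. -/
def DK : RatFuncTwo := 1 + 2 * xK + 2 * yK + xK * yK

/-- The subfield `L = ℚ(t_•, t_∘)`. -/
def LL : Subfield RatFuncTwo := Subfield.closure {tBul, tCir}

/-- `γ = (t_• t_∘)⁻¹`, which equals `D²/(xy)`. -/
def gam : RatFuncTwo := (tBul * tCir)⁻¹

/-- `δ = (1 - 2t_• - 2t_∘)·γ`, which equals `(1+xy)D/(xy)`. -/
def del : RatFuncTwo := (1 - 2 * tBul - 2 * tCir) * gam

lemma hinj : Function.Injective (algebraMap (MvPolynomial (Fin 2) ℚ) RatFuncTwo) :=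
  IsFractionRing.injective _ _

lemma hxne : xK ≠ 0 := by
  intro h
  have h2 : algebraMap (MvPolynomial (Fin 2) ℚ) RatFuncTwo (MvPolynomial.X 0)
      = algebraMap (MvPolynomial (Fin 2) ℚ) RatFuncTwo 0 := by rw [map_zero]; exact h
  exact MvPolynomial.X_ne_zero 0 (hinj h2)

lemma hyne : yK ≠ 0 := by
  intro h
  have h2 : algebraMap (MvPolynomial (Fin 2) ℚ) RatFuncTwo (MvPolynomial.X 1)
      = algebraMap (MvPolynomial (Fin 2) ℚ) RatFuncTwo 0 := by rw [map_zero]; exact h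
  exact MvPolynomial.X_ne_zero 1 (hinj h2)

lemma DK_eq_map : DK = algebraMap (MvPolynomial (Fin 2) ℚ) RatFuncTwo
    (1 + 2 * MvPolynomial.X 0 + 2 * MvPolynomial.X 1 + MvPolynomial.X 0 * MvPolynomial.X 1) := by
  simp [DK, xK, yK, map_add, map_mul, map_one, map_ofNat]

lemma hDne : DK ≠ 0 := by
  rw [DK_eq_map]
  intro h
  have h1 : algebraMap (MvPolynomial (Fin 2) ℚ) RatFuncTwo
      (1 + 2 * MvPolynomial.X 0 + 2 * MvPolynomial.X 1 + MvPolynomial.X 0 * MvPolynomial.X 1)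
      = algebraMap (MvPolynomial (Fin 2) ℚ) RatFuncTwo 0 := by rw [map_zero]; exact h
  have := congrArg (MvPolynomial.eval (fun _ => (0:ℚ))) (hinj h1)
  simp at this

lemma hxyne1 : xK * yK ≠ 1 := by
  intro h
  have h2 : algebraMap (MvPolynomial (Fin 2) ℚ) RatFuncTwo (MvPolynomial.X 0 * MvPolynomial.X 1)
      = algebraMap (MvPolynomial (Fin 2) ℚ) RatFuncTwo 1 := by
    simpa [xK, yK, map_mul, map_one] using h
  have := congrArg (MvPolynomial.eval (fun _ => (0:ℚ))) (hinj h2)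
  simp at this

lemma tBul_eq : tBul = xK / DK := rfl
lemma tCir_eq : tCir = yK / DK := rfl

lemma DK_def : DK = 1 + 2 * xK + 2 * yK + xK * yK := rfl

lemma hDsq : DK ^ 2 = del * DK - gam := by
  rw [del, gam, tBul_eq, tCir_eq]
  have hx := hxne; have hy := hyne; have hD := hDne
  field_simp
  rw [DK_def]
  ring

lemma del_eq : del = (1 + xK * yK) * DK / (xK * yK) := by
  rw [del, gam, tBul_eq, tCir_eq]
  have hx := hxne; have hy := hyne; have hD := hDne
  field_simp
  rw [DK_def]
  ring

lemma hdel2 : del ≠ 2 * DK := by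
  intro h
  have hx := hxne; have hy := hyne; have hD := hDne
  have key : (del - 2 * DK) * (xK * yK) = DK * (1 - xK * yK) := by
    rw [del_eq]
    field_simp
    ring
  rw [h] at key
  have h2 : DK * (1 - xK * yK) = 0 := by linear_combination -key
  rcases mul_eq_zero.mp h2 with h3 | h3
  · exact hDne h3
  · exact hxyne1 (by linear_combination -h3)

lemma tBul_mem : tBul ∈ LL := Subfield.subset_closure (by simp)
lemma tCir_mem : tCir ∈ LL := Subfield.subset_closure (by simp)

lemma two_mem_LL : (2 : RatFuncTwo) ∈ LL := by
  have : (2 : RatFuncTwo) = 1 + 1 := by norm_num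
  rw [this]; exact add_mem (one_mem _) (one_mem _)

lemma gam_mem : gam ∈ LL := inv_mem (mul_mem tBul_mem tCir_mem)

lemma del_mem : del ∈ LL :=
  mul_mem (sub_mem (sub_mem (one_mem _) (mul_mem two_mem_LL tBul_mem))
    (mul_mem two_mem_LL tCir_mem)) gam_mem

section U

variable (u : RatFuncTwo ≃+* RatFuncTwo) (hux : u xK = yK⁻¹) (huy : u yK = xK⁻¹)

include hux huy

lemma huD' : u DK = DK * (xK * yK)⁻¹ := by
  have h2 : u (2 : RatFuncTwo) = 2 := map_ofNat u 2
  have : u DK = 1 + 2 * yK⁻¹ + 2 * xK⁻¹ + yK⁻¹ * xK⁻¹ := by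
    simp only [DK, map_add, map_mul, map_one, hux, huy, h2]
  rw [this, DK_def]
  have hx := hxne; have hy := hyne
  field_simp
  ring

lemma huD : u DK = del - DK := by
  rw [huD' u hux huy, del, gam, tBul_eq, tCir_eq]
  have hx := hxne; have hy := hyne; have hD := hDne
  field_simp
  rw [DK_def]
  ring

lemma hutB : u tBul = tBul := by
  have : u tBul = u xK / u DK := map_div₀ u xK DK
  rw [this, hux, huD' u hux huy, tBul_eq]
  have hx := hxne; have hy := hyne; have hD := hDne
  field_simp

lemma hutC : u tCir = tCir := by
  have : u tCir = u yK / u DK := map_div₀ u yK DK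
  rw [this, huy, huD' u hux huy, tCir_eq]
  have hx := hxne; have hy := hyne; have hD := hDne
  field_simp

lemma hufix : ∀ a ∈ LL, u a = a := by
  intro a ha
  induction ha using Subfield.closure_induction with
  | mem x hx =>
    rcases hx with h | h
    · rw [h]; exact hutB u hux huy
    · rw [Set.mem_singleton_iff] at h; rw [h]; exact hutC u hux huy
  | one => exact map_one u
  | add x y hx hy ihx ihy => rw [map_add, ihx, ihy]
  | neg x hx ihx => rw [map_neg, ihx]
  | inv x hx ihx => rw [map_inv₀, ihx]
  | mul x y hx hy ihx ihy => rw [map_mul, ihx, ihy]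

set_option maxHeartbeats 8000000 in
/-- The set of elements of the form `p + q·D` with `p, q ∈ L`, as a subfield. -/
def Sfield : Subfield RatFuncTwo :=
  { carrier := {a | ∃ p ∈ LL, ∃ q ∈ LL, a = p + q * DK}
    zero_mem' := ⟨0, zero_mem _, 0, zero_mem _, by ring⟩
    one_mem' := ⟨1, one_mem _, 0, zero_mem _, by ring⟩
    add_mem' := by
      rintro a b ⟨p, hp, q, hq, rfl⟩ ⟨p', hp', q', hq', rfl⟩
      exact ⟨p + p', add_mem hp hp', q + q', add_mem hq hq', by ring⟩
    neg_mem' := by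
      rintro a ⟨p, hp, q, hq, rfl⟩
      exact ⟨-p, neg_mem hp, -q, neg_mem hq, by ring⟩
    mul_mem' := by
      rintro a b ⟨p, hp, q, hq, rfl⟩ ⟨p', hp', q', hq', rfl⟩
      refine ⟨p * p' - q * q' * gam,
        sub_mem (mul_mem hp hp') (mul_mem (mul_mem hq hq') gam_mem),
        p * q' + q * p' + q * q' * del,
        add_mem (add_mem (mul_mem hp hq') (mul_mem hq hp')) (mul_mem (mul_mem hq hq') del_mem),
        ?_⟩
      linear_combination (q * q') * hDsq
    inv_mem' := by
      rintro a ⟨p, hp, q, hq, rfl⟩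
      by_cases h0 : p + q * DK = 0
      · rw [h0]
        exact ⟨0, zero_mem _, 0, zero_mem _, by simp⟩
      · set N : RatFuncTwo := p ^ 2 + p * q * del + q ^ 2 * gam with hNdef
        have hNL : N ∈ LL := add_mem (add_mem (pow_mem hp 2)
          (mul_mem (mul_mem hp hq) del_mem)) (mul_mem (pow_mem hq 2) gam_mem)
        have hua : u (p + q * DK) = p + q * (del - DK) := by
          rw [map_add, map_mul, hufix u hux huy p hp, hufix u hux huy q hq, huD u hux huy]
        have hNf : N = (p + q * DK) * (p + q * (del - DK)) := by
          rw [hNdef]; linear_combination q ^ 2 * hDsq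
        have hu0 : p + q * (del - DK) ≠ 0 := by
          intro h
          apply h0
          have : u (p + q * DK) = 0 := by rw [hua, h]
          simpa using u.injective (by simpa using this)
        have hN0 : N ≠ 0 := by rw [hNf]; exact mul_ne_zero h0 hu0
        refine ⟨(p + q * del) * N⁻¹,
          mul_mem (add_mem hp (mul_mem hq del_mem)) (inv_mem hNL),
          (-q) * N⁻¹, mul_mem (neg_mem hq) (inv_mem hNL), ?_⟩
        have key : (p + q * del) * N⁻¹ + (-q) * N⁻¹ * DK = (p + q * (del - DK)) * N⁻¹ := by
          ring
        rw [key, hNf, mul_inv, eq_comm,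
          mul_comm ((p + q * DK)⁻¹) ((p + q * (del - DK))⁻¹), ← mul_assoc,
          mul_inv_cancel₀ hu0, one_mul]
    }

lemma mem_Sfield (a : RatFuncTwo) :
    a ∈ Sfield u hux huy ↔ ∃ p ∈ LL, ∃ q ∈ LL, a = p + q * DK := Iff.rfl

set_option maxHeartbeats 8000000 in
/-- Every element of `K` can be written `p + q·D` with `p, q ∈ L`. -/
lemma span_all : ∀ a : RatFuncTwo, ∃ p ∈ LL, ∃ q ∈ LL, a = p + q * DK := by
  set S : Subfield RatFuncTwo := Sfield u hux huy with hS
  have hxS : xK ∈ S := by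
    rw [hS, mem_Sfield u hux huy]
    refine ⟨0, zero_mem _, tBul, tBul_mem, ?_⟩
    rw [tBul_eq]
    have hD := hDne
    field_simp
    ring
  have hyS : yK ∈ S := by
    rw [hS, mem_Sfield u hux huy]
    refine ⟨0, zero_mem _, tCir, tCir_mem, ?_⟩
    rw [tCir_eq]
    have hD := hDne
    field_simp
    ring
  have hXS : ∀ i : Fin 2, algebraMap (MvPolynomial (Fin 2) ℚ) RatFuncTwo (MvPolynomial.X i) ∈ S := by
    intro i
    fin_cases i
    · exact hxS
    · exact hyS
  have hpoly : ∀ P : MvPolynomial (Fin 2) ℚ, algebraMap (MvPolynomial (Fin 2) ℚ) RatFuncTwo P ∈ S := by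
    intro P
    induction P using MvPolynomial.induction_on with
    | C q =>
      have : algebraMap (MvPolynomial (Fin 2) ℚ) RatFuncTwo (MvPolynomial.C q)
          = ((q : ℚ) : RatFuncTwo) :=
        eq_ratCast ((algebraMap (MvPolynomial (Fin 2) ℚ) RatFuncTwo).comp MvPolynomial.C) q
      rw [this]
      exact SubfieldClass.ratCast_mem S q
    | add f g hf hg => rw [map_add]; exact add_mem hf hg
    | mul_X f i hf => rw [map_mul]; exact mul_mem hf (hXS i)
  intro a
  obtain ⟨pn, qn, hqn, hdiv⟩ := IsFractionRing.div_surjective (A := MvPolynomial (Fin 2) ℚ) a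
  have haS : a ∈ S := by
    rw [← hdiv]
    exact div_mem (hpoly pn) (hpoly qn)
  rw [hS, mem_Sfield u hux huy] at haS
  exact haS

end U

/-- If `F ∈ ℚ(x,y)` is fixed by the swap automorphism `σ` (determined by `x ↦ y`, `y ↦ x`)
and by the inversion automorphism `τ` (determined by `x ↦ x⁻¹`, `y ↦ y⁻¹`), then `F` lies
in the subfield generated (over `ℚ`) by `t_•` and `t_∘`. -/
theorem rationality_criterion
    (σ τ : RatFuncTwo ≃+* RatFuncTwo)
    (hσx : σ xK = yK) (hσy : σ yK = xK)
    (hτx : τ xK = xK⁻¹) (hτy : τ yK = yK⁻¹)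
    (F : RatFuncTwo) (hσF : σ F = F) (hτF : τ F = F) :
    F ∈ Subfield.closure {tBul, tCir} := by
  set u : RatFuncTwo ≃+* RatFuncTwo := σ.trans τ with hu
  have hux : u xK = yK⁻¹ := by
    show τ (σ xK) = yK⁻¹
    rw [hσx, hτy]
  have huy : u yK = xK⁻¹ := by
    show τ (σ yK) = xK⁻¹
    rw [hσy, hτx]
  have huF : u F = F := by
    show τ (σ F) = F
    rw [hσF, hτF]
  obtain ⟨p, hp, q, hq, hF⟩ := span_all u hux huy F
  have h1 : u F = p + q * (del - DK) := by
    rw [hF, map_add, map_mul, hufix u hux huy p hp, hufix u hux huy q hq, huD u hux huy]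
  have h3 : p + q * DK = p + q * (del - DK) := by
    rw [← hF, ← huF, h1]
  have h2 : q * (2 * DK - del) = 0 := by linear_combination h3
  have hq0 : q = 0 := by
    rcases mul_eq_zero.mp h2 with h | h
    · exact h
    · exact absurd (by linear_combination -h : del = 2 * DK) hdel2
  have hFp : F = p := by rw [hF, hq0]; ring
  exact hFp ▸ hp
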